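/- For jointly Gaussian vectors, the one-step information transfer from x₁ to y, with x₂ the remaining states, is [T_{x₁→y}] = (1/2) log( det(A_{yx} Σ_y^s A_{yx}^⊤ + σ²I) / det(A_{yx₂}(Σ_y^s)_{yx₂} A_{yx₂}^⊤ + σ²I) ), where Σ_y^s = Σ_x − Σ_{xy} Σ_y^{-1} Σ_{xy}^⊤ and (Σ_y^s)_{yx₂} = Σ_{x₂} − Σ_{x₂y} Σ_y^{-1} Σ_{x₂y}^⊤. -/

import Mathlib

open Matrix

noncomputable def gaussEntropy (d : ℕ) (S : Matrix (Fin d) (Fin d) ℝ) : ℝ :=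
  (1 / 2) * Real.log ((2 * Real.pi * Real.exp 1) ^ d * S.det)

lemma smul_one_posDef {q : ℕ} {σ : ℝ} (hσ : 0 < σ) :
    (σ ^ 2 • (1 : Matrix (Fin q) (Fin q) ℝ)).PosDef := by
  have : σ ^ 2 • (1 : Matrix (Fin q) (Fin q) ℝ)
      = Matrix.diagonal (fun _ => σ ^ 2) := by
    ext i j
    by_cases h : i = j <;> simp [Matrix.one_apply, Matrix.diagonal, h]
  rw [this]
  exact Matrix.posDef_diagonal_iff.mpr fun _ => pow_pos hσ 2

theorem information_transfer_x1_to_y {p₁ p₂ q : ℕ}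
    (Ayx : Matrix (Fin q) (Fin p₁ ⊕ Fin p₂) ℝ)
    (Sx : Matrix (Fin p₁ ⊕ Fin p₂) (Fin p₁ ⊕ Fin p₂) ℝ)
    (Sxy : Matrix (Fin p₁ ⊕ Fin p₂) (Fin q) ℝ)
    (Sy : Matrix (Fin q) (Fin q) ℝ) (σ : ℝ) (hσ : 0 < σ)
    (hS : (Matrix.fromBlocks Sx Sxy Sxyᵀ Sy).PosDef)
    -- the blocks associated with the sub-state `x₂`
    (Ayx₂ : Matrix (Fin q) (Fin p₂) ℝ) (hA₂ : Ayx₂ = Ayx.submatrix id Sum.inr)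
    (Sx₂ : Matrix (Fin p₂) (Fin p₂) ℝ) (hSx₂ : Sx₂ = Sx.submatrix Sum.inr Sum.inr)
    (Sx₂y : Matrix (Fin p₂) (Fin q) ℝ) (hSx₂y : Sx₂y = Sxy.submatrix Sum.inr id) :
    gaussEntropy q (Ayx * (Sx - Sxy * Sy⁻¹ * Sxyᵀ) * Ayxᵀ + σ ^ 2 • (1 : Matrix (Fin q) (Fin q) ℝ))
      - gaussEntropy q (Ayx₂ * (Sx₂ - Sx₂y * Sy⁻¹ * Sx₂yᵀ) * Ayx₂ᵀ + σ ^ 2 • (1 : Matrix (Fin q) (Fin q) ℝ))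
    = (1 / 2) * Real.log
        ((Ayx * (Sx - Sxy * Sy⁻¹ * Sxyᵀ) * Ayxᵀ + σ ^ 2 • (1 : Matrix (Fin q) (Fin q) ℝ)).det /
          (Ayx₂ * (Sx₂ - Sx₂y * Sy⁻¹ * Sx₂yᵀ) * Ayx₂ᵀ + σ ^ 2 • (1 : Matrix (Fin q) (Fin q) ℝ)).det) := by
  subst hA₂ hSx₂ hSx₂y
  -- `Sy` is positive definite
  have hSy : Sy.PosDef := by
    refine ⟨?_, fun x hx => ?_⟩
    · have h := hS.1
      rw [Matrix.isHermitian_fromBlocks_iff] at h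
      exact h.2.2.2
    · have h := (hS.submatrix (Sum.inr_injective (α := Fin p₁ ⊕ Fin p₂) (β := Fin q))).2 hx
      have he : (Matrix.fromBlocks Sx Sxy Sxyᵀ Sy).submatrix Sum.inr Sum.inr = Sy := by
        ext i j; rfl
      rwa [he] at h
  haveI : Invertible Sy := Sy.invertibleOfIsUnitDet hSy.det_pos.ne'.isUnit
  -- the Schur complement is positive semidefinite
  have hT : Sxyᴴ = Sxyᵀ := Matrix.conjTranspose_eq_transpose_of_trivial Sxy
  have hSchur : (Sx - Sxy * Sy⁻¹ * Sxyᵀ).PosSemidef := by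
    rw [← hT]
    exact (Matrix.PosDef.fromBlocks₂₂ Sx Sxy hSy).mp (by rw [hT]; exact hS.posSemidef)
  -- the restricted Schur complement is a principal submatrix
  have hsub : Sx.submatrix Sum.inr Sum.inr -
      Sxy.submatrix Sum.inr id * Sy⁻¹ * (Sxy.submatrix Sum.inr id)ᵀ
      = (Sx - Sxy * Sy⁻¹ * Sxyᵀ).submatrix Sum.inr Sum.inr := by
    ext i j
    simp [Matrix.mul_apply, Matrix.submatrix_apply, Finset.mul_sum, Finset.sum_mul]
  have hSchur₂ : (Sx.submatrix Sum.inr Sum.inr -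
      Sxy.submatrix Sum.inr id * Sy⁻¹ * (Sxy.submatrix Sum.inr id)ᵀ).PosSemidef := by
    rw [hsub]; exact hSchur.submatrix Sum.inr
  -- the two conditional covariances are positive definite
  have hM1 : (Ayx * (Sx - Sxy * Sy⁻¹ * Sxyᵀ) * Ayxᵀ
      + σ ^ 2 • (1 : Matrix (Fin q) (Fin q) ℝ)).PosDef := by
    refine Matrix.PosDef.posSemidef_add ?_ (smul_one_posDef hσ)
    have := hSchur.mul_mul_conjTranspose_same Ayx
    rwa [Matrix.conjTranspose_eq_transpose_of_trivial] at this
  have hM2 : (Ayx.submatrix id Sum.inr * (Sx.submatrix Sum.inr Sum.inr -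
      Sxy.submatrix Sum.inr id * Sy⁻¹ * (Sxy.submatrix Sum.inr id)ᵀ) *
      (Ayx.submatrix id Sum.inr)ᵀ + σ ^ 2 • (1 : Matrix (Fin q) (Fin q) ℝ)).PosDef := by
    refine Matrix.PosDef.posSemidef_add ?_ (smul_one_posDef hσ)
    have := hSchur₂.mul_mul_conjTranspose_same (Ayx.submatrix id Sum.inr)
    rwa [Matrix.conjTranspose_eq_transpose_of_trivial] at this
  -- log arithmetic
  have hc : (0:ℝ) < (2 * Real.pi * Real.exp 1) ^ q :=
    pow_pos (by positivity) q
  have hd1 := hM1.det_pos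
  have hd2 := hM2.det_pos
  unfold gaussEntropy
  rw [← mul_sub, ← Real.log_div (by positivity) (by positivity),
    mul_div_mul_left _ _ hc.ne']
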